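/- There exists a statistically quasi-Cauchy sequence of real numbers that is not statistically convergent (to any limit). For instance, the sequence xₖ = √k is statistically quasi-Cauchy but not statistically convergent. -/

import Mathlib

open Filter

/-- A 2-normed space: a real linear space with dim > 1 together with a 2-norm. -/
structure TwoNormedSpace (X : Type*) [AddCommGroup X] [Module ℝ X] : Type _ where
  toFun : X → X → ℝ
  one_lt_rank : 1 < Module.rank ℝ X
  eq_zero_iff : ∀ x y : X, toFun x y = 0 ↔ ¬ LinearIndependent ℝ ![x, y]
  symm : ∀ x y : X, toFun x y = toFun y x
  smul_left : ∀ (α : ℝ) (x y : X), toFun (α • x) y = |α| * toFun x y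
  add_right : ∀ x y z : X, toFun x (y + z) ≤ toFun x y + toFun x z

variable {X : Type*} [AddCommGroup X] [Module ℝ X]

/-- A sequence is statistically quasi-Cauchy w.r.t. a 2-norm `N`. -/
def StatQuasiCauchy (N : X → X → ℝ) (x : ℕ → X) : Prop :=
  ∀ ε > (0:ℝ), ∀ z : X, Tendsto
    (fun n => (((Finset.range n).filter (fun k => ε ≤ N (x (k+1) - x k) z)).card : ℝ) / n)
    atTop (nhds 0)

/-- A sequence statistically converges to `L` w.r.t. a 2-norm `N`. -/
def StatConv (N : X → X → ℝ) (x : ℕ → X) (L : X) : Prop :=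
  ∀ ε > (0:ℝ), ∀ z : X, Tendsto
    (fun n => (((Finset.range n).filter (fun k => ε ≤ N (x k - L) z)).card : ℝ) / n)
    atTop (nhds 0)

/-- A sequence converges to `L` w.r.t. a 2-norm `N`. -/
def ConvTo (N : X → X → ℝ) (x : ℕ → X) (L : X) : Prop :=
  ∀ z : X, Tendsto (fun n => N (x n - L) z) atTop (nhds 0)

/-- A sequence is quasi-Cauchy w.r.t. a 2-norm `N`. -/
def QuasiCauchy (N : X → X → ℝ) (x : ℕ → X) : Prop :=
  ∀ z : X, Tendsto (fun n => N (x (n+1) - x n) z) atTop (nhds 0)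

/-- A subset `E` is statistically ward compact w.r.t. a 2-norm `N`. -/
def StatWardCompact (N : X → X → ℝ) (E : Set X) : Prop :=
  ∀ x : ℕ → X, (∀ n, x n ∈ E) → ∃ φ : ℕ → ℕ, StrictMono φ ∧ StatQuasiCauchy N (x ∘ φ)

/-- `f` is statistically ward continuous on `E` w.r.t. a 2-norm `N`. -/
def StatWardContinuousOn (N : X → X → ℝ) (f : X → X) (E : Set X) : Prop :=
  ∀ x : ℕ → X, (∀ n, x n ∈ E) → StatQuasiCauchy N x → StatQuasiCauchy N (fun n => f (x n))

/-- The standard 2-norm on `ℝ²`: the area of the parallelogram spanned by `a` and `b`. -/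
def N2 : ℝ × ℝ → ℝ × ℝ → ℝ := fun a b => |a.1 * b.2 - a.2 * b.1|

/-- A real sequence is statistically quasi-Cauchy. -/
def StatQuasiCauchyR (x : ℕ → ℝ) : Prop :=
  ∀ ε > (0:ℝ), Tendsto
    (fun n => (((Finset.range n).filter (fun k => ε ≤ |x (k+1) - x k|)).card : ℝ) / n)
    atTop (nhds 0)

/-- A real sequence statistically converges to `L`. -/
def StatConvR (x : ℕ → ℝ) (L : ℝ) : Prop :=
  ∀ ε > (0:ℝ), Tendsto
    (fun n => (((Finset.range n).filter (fun k => ε ≤ |x k - L|)).card : ℝ) / n)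
    atTop (nhds 0)


open Finset in
lemma sqrtAtTop : Tendsto Real.sqrt atTop atTop := by
  apply tendsto_atTop_atTop_of_monotone (fun a b h => Real.sqrt_le_sqrt h)
  intro b
  exact ⟨(max b 0)^2, by rw [Real.sqrt_sq (le_max_right _ _)]; exact le_max_left _ _⟩

lemma diff_tendsto :
    Tendsto (fun k : ℕ => Real.sqrt (k+1) - Real.sqrt k) atTop (nhds 0) := by
  have h1 : Tendsto (fun k : ℕ => (Real.sqrt (k+1))⁻¹) atTop (nhds 0) := by
    apply Tendsto.inv_tendsto_atTop
    apply sqrtAtTop.comp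
    apply tendsto_atTop_add_const_right
    exact tendsto_natCast_atTop_atTop
  apply squeeze_zero (g := fun k : ℕ => (Real.sqrt (k+1))⁻¹)
  · intro k
    have : Real.sqrt k ≤ Real.sqrt (k+1) := Real.sqrt_le_sqrt (by linarith)
    linarith
  · intro k
    have hs : (0:ℝ) < Real.sqrt (k+1) := Real.sqrt_pos.2 (by positivity)
    have key : Real.sqrt (k+1) * Real.sqrt (k+1) - Real.sqrt (k+1) * Real.sqrt k ≤ 1 := by
      rw [Real.mul_self_sqrt (by positivity), ← Real.sqrt_mul (by positivity)]
      have hk : ((k:ℝ)) = Real.sqrt ((k:ℝ)*(k:ℝ)) := by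
        rw [Real.sqrt_mul_self (Nat.cast_nonneg k)]
      nlinarith [Real.sqrt_le_sqrt (show (k:ℝ)*(k:ℝ) ≤ ((k:ℝ)+1)*k by nlinarith)]
    rw [inv_eq_one_div, le_div_iff₀ hs]
    nlinarith [key]
  · exact h1

theorem stmt6 :
    StatQuasiCauchyR (fun k => Real.sqrt k) ∧
    ∀ L : ℝ, ¬ StatConvR (fun k => Real.sqrt k) L := by
  constructor
  · intro ε hε
    simp only [Nat.cast_add, Nat.cast_one]
    have h := diff_tendsto.eventually (gt_mem_nhds hε)
    rw [eventually_atTop] at h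
    obtain ⟨K, hK⟩ := h
    apply squeeze_zero (g := fun n : ℕ => (K:ℝ) / n)
    · intro n; positivity
    · intro n
      have hsub : ((Finset.range n).filter
          (fun k : ℕ => ε ≤ |Real.sqrt ((k:ℝ)+1) - Real.sqrt k|)) ⊆ Finset.range K := by
        intro k hk
        simp only [Finset.mem_filter, Finset.mem_range] at hk ⊢
        by_contra hkK
        push_neg at hkK
        have h1 := hK k hkK
        have h2 : Real.sqrt k ≤ Real.sqrt ((k:ℝ)+1) := Real.sqrt_le_sqrt (by linarith)
        rw [abs_of_nonneg (by linarith)] at hk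
        linarith [hk.2]
      have hc := Finset.card_le_card hsub
      rw [Finset.card_range] at hc
      apply div_le_div_of_nonneg_right ?_ (Nat.cast_nonneg n)
      exact Nat.cast_le.2 hc
    · exact tendsto_const_div_atTop_nhds_zero_nat (K:ℝ)
  · intro L hL
    have h := hL 1 one_pos
    have hs : Tendsto (fun k : ℕ => Real.sqrt k) atTop atTop :=
      sqrtAtTop.comp tendsto_natCast_atTop_atTop
    obtain ⟨K, hK⟩ := (hs.eventually_ge_atTop (L + 1)).exists_forall_of_atTop
    have key : ∀ n : ℕ, K ≤ n → ((n:ℝ) - K) / n ≤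
        (((Finset.range n).filter (fun k : ℕ => (1:ℝ) ≤ |Real.sqrt k - L|)).card : ℝ) / n := by
      intro n hn
      apply div_le_div_of_nonneg_right ?_ (Nat.cast_nonneg n)
      have hsub : Finset.Ico K n ⊆ (Finset.range n).filter
          (fun k : ℕ => (1:ℝ) ≤ |Real.sqrt k - L|) := by
        intro k hk
        rw [Finset.mem_Ico] at hk
        rw [Finset.mem_filter, Finset.mem_range]
        refine ⟨hk.2, ?_⟩
        have := hK k hk.1
        rw [abs_of_nonneg (by linarith)]
        linarith
      have hc := Finset.card_le_card hsub
      rw [Nat.card_Ico] at hc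
      have hc2 : ((n - K : ℕ) : ℝ) ≤ _ := Nat.cast_le.2 hc
      rwa [Nat.cast_sub hn] at hc2
    have hg : Tendsto (fun n : ℕ => ((n:ℝ) - K) / n) atTop (nhds 1) := by
      have h2 : Tendsto (fun n : ℕ => 1 - (K:ℝ) / n) atTop (nhds 1) := by
        have := (tendsto_const_nhds (x := (1:ℝ)) (f := atTop (α := ℕ))).sub
          (tendsto_const_div_atTop_nhds_zero_nat (K:ℝ))
        simpa using this
      apply h2.congr'
      filter_upwards [eventually_ne_atTop 0] with n hn
      have hn' : (n:ℝ) ≠ 0 := Nat.cast_ne_zero.2 hn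
      field_simp
    have hle : (1:ℝ) ≤ 0 := by
      apply le_of_tendsto_of_tendsto hg h
      filter_upwards [eventually_ge_atTop K] with n hn
      exact key n hn
    linarith
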